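/- arXiv:2105.11280 — 2 statements merged into one kernel-verified Lean document; each statement's English description precedes it below -/
import Mathlib

section
/- Let G be a Polish group (a separable, completely metrizable topological group). Then G has a dense conjugacy class if and only if G has the joint embedding property, i.e., for any two nonempty open sets U and V in G there exists g ∈ G such that U ∩ gVg⁻¹ ≠ ∅. -/
/-- A Polish group has a dense conjugacy class iff it has the joint embedding property. -/
theorem polish_group_dense_conjugacy_iff_jep
    {G : Type*} [TopologicalSpace G] [Group G] [IsTopologicalGroup G] [PolishSpace G] :
    (∃ f : G, Dense (Set.range fun h : G => h * f * h⁻¹)) ↔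
      (∀ U V : Set G, IsOpen U → IsOpen V → U.Nonempty → V.Nonempty →
        ∃ g : G, (U ∩ (fun v => g * v * g⁻¹) '' V).Nonempty) := by
  constructor
  · rintro ⟨f, hf⟩ U V hU hV hUne hVne
    obtain ⟨x, ⟨h, rfl⟩, hxU⟩ := hf.exists_mem_open hU hUne
    obtain ⟨y, ⟨k, rfl⟩, hyV⟩ := hf.exists_mem_open hV hVne
    refine ⟨h * k⁻¹, h * f * h⁻¹, hxU, k * f * k⁻¹, hyV, ?_⟩
    group
  · intro jep
    letI := TopologicalSpace.upgradeIsCompletelyMetrizable G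
    obtain ⟨b, hbc, -, hbbasis⟩ := TopologicalSpace.exists_countable_basis G
    set W : Set G → Set G := fun U => ⋃ h : G, (fun x => h * x * h⁻¹) ⁻¹' U with hW
    have hcont : ∀ h : G, Continuous (fun x : G => h * x * h⁻¹) := by
      intro h; fun_prop
    have hWopen : ∀ U ∈ b, IsOpen (W U) := fun U hU =>
      isOpen_iUnion fun h => (hbbasis.isOpen hU).preimage (hcont h)
    have hWdense : ∀ U ∈ b, U.Nonempty → Dense (W U) := by
      intro U hUb hUne
      rw [dense_iff_inter_open]
      intro V hV hVne
      obtain ⟨g, x, hxU, v, hvV, hgv⟩ := jep U V (hbbasis.isOpen hUb) hV hUne hVne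
      exact ⟨v, hvV, Set.mem_iUnion.2 ⟨g, by simpa [hgv] using hxU⟩⟩
    have hbc' : {U ∈ b | U.Nonempty}.Countable := hbc.mono (Set.sep_subset _ _)
    have hdense : Dense (⋂ U ∈ {U ∈ b | U.Nonempty}, W U) :=
      dense_biInter_of_isOpen (fun U hU => hWopen U hU.1) hbc'
        (fun U hU => hWdense U hU.1 hU.2)
    obtain ⟨f, hf⟩ := hdense.nonempty
    simp only [Set.mem_iInter] at hf
    refine ⟨f, hbbasis.dense_iff.2 fun o ho hone => ?_⟩
    obtain ⟨h, hh⟩ := Set.mem_iUnion.1 (hf o ⟨ho, hone⟩)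
    exact ⟨h * f * h⁻¹, hh, h, rfl⟩
end

section
/- Let G be a Polish group with the joint embedding property. Then the set D of elements of G whose conjugacy class is dense in G is itself a dense (indeed, comeager) subset of G. -/
/-- In a Polish group with the joint embedding property, the set of elements whose
conjugacy class is dense is dense (indeed comeager). -/
theorem dense_class_elements_dense_of_jep
    {G : Type*} [TopologicalSpace G] [Group G] [IsTopologicalGroup G] [PolishSpace G]
    (hJEP : ∀ U V : Set G, IsOpen U → IsOpen V → U.Nonempty → V.Nonempty →
      ∃ g : G, (U ∩ (fun v => g * v * g⁻¹) '' V).Nonempty) :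
    Dense {f : G | Dense (Set.range fun h : G => h * f * h⁻¹)} ∧
      {f : G | Dense (Set.range fun h : G => h * f * h⁻¹)} ∈ residual G := by
  letI := TopologicalSpace.upgradeIsCompletelyMetrizable G
  obtain ⟨b, hbc, -, hbb⟩ := TopologicalSpace.exists_countable_basis G
  have key : {f : G | Dense (Set.range fun h : G => h * f * h⁻¹)} ∈ residual G := by
    have hSeq : {f : G | Dense (Set.range fun h : G => h * f * h⁻¹)} =
        ⋂ U ∈ {U ∈ b | U.Nonempty}, {f : G | ∃ h : G, h * f * h⁻¹ ∈ U} := by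
      ext f
      simp only [Set.mem_setOf_eq, Set.mem_iInter, Set.mem_sep_iff]
      constructor
      · rintro hd U ⟨hUb, hUne⟩
        obtain ⟨x, ⟨h, rfl⟩, hxU⟩ := hd.exists_mem_open (hbb.isOpen hUb) hUne
        exact ⟨h, hxU⟩
      · intro H
        rw [hbb.dense_iff]
        rintro o hob hone
        obtain ⟨h, hh⟩ := H o ⟨hob, hone⟩
        exact ⟨h * f * h⁻¹, hh, h, rfl⟩
    rw [hSeq]
    refine (countable_bInter_mem (hbc.mono (Set.sep_subset _ _))).2 ?_
    rintro U ⟨hUb, hUne⟩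
    have heq : {f : G | ∃ h : G, h * f * h⁻¹ ∈ U} =
        ⋃ h : G, (fun f => h * f * h⁻¹) ⁻¹' U := by
      ext f; simp [Set.mem_iUnion]
    rw [heq]
    refine residual_of_dense_open ?_ ?_
    · exact isOpen_iUnion fun h =>
        (hbb.isOpen hUb).preimage (by continuity)
    · rw [dense_iff_inter_open]
      intro V hV hVne
      obtain ⟨g, x, hxU, v, hvV, hvx⟩ := hJEP U V (hbb.isOpen hUb) hV hUne hVne
      exact ⟨v, hvV, Set.mem_iUnion.2 ⟨g, by simpa [hvx] using hxU⟩⟩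
  exact ⟨dense_of_mem_residual key, key⟩
end
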